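/- The map φ_M(P) = M P Mᵀ, for M ∈ O(n), is a group homomorphism with respect to the operation ⊙ on SPD matrices: φ_M(X ⊙ Y) = φ_M(X) ⊙ φ_M(Y). -/

import Mathlib

open Matrix

/-- The matrix exponential on real square matrices. -/
noncomputable def mexp {n : ℕ} (A : Matrix (Fin n) (Fin n) ℝ) : Matrix (Fin n) (Fin n) ℝ :=
  NormedSpace.exp A

open scoped Classical in
/-- The principal matrix logarithm of a symmetric positive definite matrix:
the (unique) symmetric matrix whose exponential is `X` (junk value `0` otherwise). -/
noncomputable def spdLog {n : ℕ} (X : Matrix (Fin n) (Fin n) ℝ) : Matrix (Fin n) (Fin n) ℝ :=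
  if h : ∃ A : Matrix (Fin n) (Fin n) ℝ, A.IsSymm ∧ mexp A = X then h.choose else 0

/-- The Lie group operation `P ⊙ Q = exp (log P + log Q)` on SPD matrices. -/
noncomputable def odot {n : ℕ} (P Q : Matrix (Fin n) (Fin n) ℝ) : Matrix (Fin n) (Fin n) ℝ :=
  mexp (spdLog P + spdLog Q)

lemma isSymm_iff_isSelfAdjoint {n : ℕ} (A : Matrix (Fin n) (Fin n) ℝ) :
    A.IsSymm ↔ _root_.IsSelfAdjoint A := by
  rw [_root_.IsSelfAdjoint, Matrix.star_eq_conjTranspose,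
    conjTranspose_eq_transpose_of_trivial, Matrix.IsSymm]

/-- `mexp` is injective on symmetric matrices. -/
lemma mexp_inj {n : ℕ} {A B : Matrix (Fin n) (Fin n) ℝ}
    (hA : A.IsSymm) (hB : B.IsSymm) (h : mexp A = mexp B) : A = B := by
  letI : NormedRing (Matrix (Fin n) (Fin n) ℝ) := Matrix.instL2OpNormedRing
  letI : NormedAlgebra ℝ (Matrix (Fin n) (Fin n) ℝ) := Matrix.instL2OpNormedAlgebra
  have hA' := (isSymm_iff_isSelfAdjoint A).1 hA
  have hB' := (isSymm_iff_isSelfAdjoint B).1 hB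
  have h1 := CFC.log_exp A hA'
  have h2 := CFC.log_exp B hB'
  rw [show NormedSpace.exp A = NormedSpace.exp B from h, h2] at h1
  exact h1.symm

/-- Existence of a symmetric logarithm for a positive definite symmetric matrix. -/
lemma exists_symm_log {n : ℕ} {X : Matrix (Fin n) (Fin n) ℝ} (hX : X.PosDef) :
    ∃ A : Matrix (Fin n) (Fin n) ℝ, A.IsSymm ∧ mexp A = X := by
  letI : NormedRing (Matrix (Fin n) (Fin n) ℝ) := Matrix.instL2OpNormedRing
  letI : NormedAlgebra ℝ (Matrix (Fin n) (Fin n) ℝ) := Matrix.instL2OpNormedAlgebra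
  have hXsa : _root_.IsSelfAdjoint X := hX.isHermitian
  refine ⟨CFC.log X, ?_, ?_⟩
  · exact (isSymm_iff_isSelfAdjoint _).2 (IsSelfAdjoint.log (a := X))
  · exact open MatrixOrder in CFC.exp_log X hX.isStrictlyPositive

lemma spdLog_spec {n : ℕ} {X : Matrix (Fin n) (Fin n) ℝ}
    (h : ∃ A : Matrix (Fin n) (Fin n) ℝ, A.IsSymm ∧ mexp A = X) :
    (spdLog X).IsSymm ∧ mexp (spdLog X) = X := by
  classical
  rw [spdLog, dif_pos h]
  exact h.choose_spec

lemma mexp_conj {n : ℕ} (M A : Matrix (Fin n) (Fin n) ℝ) (hM : M * Mᵀ = 1) :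
    M * mexp A * Mᵀ = mexp (M * A * Mᵀ) := by
  letI : NormedRing (Matrix (Fin n) (Fin n) ℝ) := Matrix.linftyOpNormedRing
  letI : NormedAlgebra ℝ (Matrix (Fin n) (Fin n) ℝ) := Matrix.linftyOpNormedAlgebra
  have hM' : Mᵀ * M = 1 := mul_eq_one_comm.mp hM
  let u : (Matrix (Fin n) (Fin n) ℝ)ˣ := ⟨M, Mᵀ, hM, hM'⟩
  have := Matrix.exp_units_conj u A
  simpa [u, mexp] using this.symm

lemma spdLog_conj {n : ℕ} {X M : Matrix (Fin n) (Fin n) ℝ} (hX : X.PosDef)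
    (hM : M * Mᵀ = 1) : spdLog (M * X * Mᵀ) = M * spdLog X * Mᵀ := by
  obtain ⟨hs, he⟩ := spdLog_spec (exists_symm_log hX)
  have hconj_symm : (M * spdLog X * Mᵀ).IsSymm := by
    rw [Matrix.IsSymm, Matrix.transpose_mul, Matrix.transpose_mul, Matrix.transpose_transpose,
      hs.eq, mul_assoc]
  have hconj_exp : mexp (M * spdLog X * Mᵀ) = M * X * Mᵀ := by
    rw [← mexp_conj M _ hM, he]
  have hex : ∃ A : Matrix (Fin n) (Fin n) ℝ, A.IsSymm ∧ mexp A = M * X * Mᵀ :=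
    ⟨_, hconj_symm, hconj_exp⟩
  obtain ⟨hs', he'⟩ := spdLog_spec hex
  exact mexp_inj hs' hconj_symm (by rw [he', hconj_exp])

/-- For orthogonal `M`, the map `φ_M(P) = M P Mᵀ` is a group homomorphism for `⊙`. -/
theorem conj_odot_hom {n : ℕ} (X Y M : Matrix (Fin n) (Fin n) ℝ)
    (hX : X.PosDef) (hXs : X.IsSymm) (hY : Y.PosDef) (hYs : Y.IsSymm)
    (hM : M * Mᵀ = 1) :
    M * odot X Y * Mᵀ = odot (M * X * Mᵀ) (M * Y * Mᵀ) := by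
  rw [odot, odot, spdLog_conj hX hM, spdLog_conj hY hM, mexp_conj _ _ hM,
    Matrix.mul_add, Matrix.add_mul]
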